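/- Let x be a stable g-matching, w ∈ W, and c ∈ E_w ∩ U_F^-(x). If there exists at least one legal w-pair of the form (c, a') under x, then there exists a unique edge a ∈ E_w such that (c, a) is a legal w-pair under x and no edge d ∈ (U_F^+(x) ∩ E_w) − {a} is interesting for w under x_w + 1^a − 1^c (i.e., a unique essential w-pair (c, a)). -/
import Mathlib


namespace SGMMStmt

/-- Data of the stable g-matching model: a bipartite graph with worker side `W`,
firm side `F`, edge set `E` with endpoint maps `ew`, `ef`, integer capacities `b`,
and a choice function at every vertex (acting on vectors `E → ℕ`, only the
coordinates on edges incident to the vertex being relevant). -/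
structure Model (W F E : Type*) where
  ew : E → W
  ef : E → F
  b : E → ℕ
  Cw : W → (E → ℕ) → (E → ℕ)
  Cf : F → (E → ℕ) → (E → ℕ)

/-- An edge-simple closed alternating sequence `(a 0, c 0, a 1, c 1, …)`;
the data of a candidate rotation. -/
structure Cyc (E : Type*) where
  k : ℕ
  hk : 0 < k
  a : Fin k → E
  c : Fin k → E

/-- Cyclically next index. -/
def Cyc.nxt {E : Type*} (R : Cyc E) (i : Fin R.k) : Fin R.k :=
  ⟨(i.1 + 1) % R.k, Nat.mod_lt _ R.hk⟩

/-- Two cycles are the same (as cyclic sequences) if they differ by a cyclic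
shift of the indexing. -/
def Cyc.Same {E : Type*} (R R' : Cyc E) : Prop :=
  R.k = R'.k ∧ ∃ s : ℕ,
    (∀ i : Fin R.k, R'.a ⟨(i.1 + s) % R'.k, Nat.mod_lt _ R'.hk⟩ = R.a i) ∧
    (∀ i : Fin R.k, R'.c ⟨(i.1 + s) % R'.k, Nat.mod_lt _ R'.hk⟩ = R.c i)

/-- The signed incidence vector `χ^R`: `+1` on the `a`-edges, `-1` on the `c`-edges. -/
def Cyc.chi {E : Type*} [DecidableEq E] (R : Cyc E) (e : E) : ℤ :=
  (if ∃ i, R.a i = e then 1 else 0) - (if ∃ i, R.c i = e then 1 else 0)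

/-- The result `x + lam • χ^R` of shifting `x` along `R` with weight `lam`. -/
def Cyc.apply {E : Type*} [DecidableEq E] (R : Cyc E) (x : E → ℕ) (lam : ℕ) : E → ℕ :=
  fun e => ((x e : ℤ) + (lam : ℤ) * R.chi e).toNat

variable {W F E : Type*} [Fintype E] [DecidableEq E] [DecidableEq W] [DecidableEq F]

/-- Membership in the integer box `{z : E → ℕ | z ≤ b}`. -/
def inBox (b z : E → ℕ) : Prop := ∀ e, z e ≤ b e

/-- `e` is interesting under `x` (for the choice function `C`). -/
def Interesting (b : E → ℕ) (C : (E → ℕ) → (E → ℕ)) (x : E → ℕ) (e : E) : Prop :=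
  ∃ z', inBox b z' ∧ x e < z' e ∧ (∀ e', e' ≠ e → z' e' = x e') ∧ x e < C z' e

/-- `C` is a choice function for the coordinates `inc` (the star of a vertex),
obeying (A1) consistency, (A2) substitutability, (A3) size monotonicity;
it acts as the identity outside `inc` and depends only on the `inc`-coordinates. -/
structure IsCF (b : E → ℕ) (inc : E → Prop) [DecidablePred inc]
    (C : (E → ℕ) → (E → ℕ)) : Prop where
  le : ∀ z, inBox b z → C z ≤ z
  offId : ∀ z e, ¬ inc e → C z e = z e
  localDep : ∀ z z' : E → ℕ, (∀ e, inc e → z e = z' e) → ∀ e, inc e → C z e = C z' e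
  a1 : ∀ z z' : E → ℕ, inBox b z → z' ≤ z → C z ≤ z' → C z' = C z
  a2 : ∀ z z' : E → ℕ, inBox b z → z' ≤ z → C z ⊓ z' ≤ C z'
  a3 : ∀ z z' : E → ℕ, inBox b z → z' ≤ z →
    ∑ e ∈ Finset.univ.filter inc, C z' e ≤ ∑ e ∈ Finset.univ.filter inc, C z e

/-- `e` is incident to worker `w`. -/
def Model.incW (M : Model W F E) (w : W) (e : E) : Prop := M.ew e = w

/-- `e` is incident to firm `f`. -/
def Model.incF (M : Model W F E) (f : F) (e : E) : Prop := M.ef e = f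

instance (M : Model W F E) (w : W) : DecidablePred (M.incW w) :=
  fun e => inferInstanceAs (Decidable (M.ew e = w))

instance (M : Model W F E) (f : F) : DecidablePred (M.incF f) :=
  fun e => inferInstanceAs (Decidable (M.ef e = f))

/-- All choice functions of the model satisfy the axioms. -/
structure Model.Valid (M : Model W F E) : Prop where
  cfW : ∀ w : W, IsCF M.b (M.incW w) (M.Cw w)
  cfF : ∀ f : F, IsCF M.b (M.incF f) (M.Cf f)

/-- `x` is a g-matching: it lies in the box and is acceptable for every vertex. -/
def Model.IsGM (M : Model W F E) (x : E → ℕ) : Prop :=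
  inBox M.b x ∧ (∀ w, M.Cw w x = x) ∧ (∀ f, M.Cf f x = x)

/-- `e` is interesting for the worker `w` under `x`. -/
def Model.IntW (M : Model W F E) (w : W) (x : E → ℕ) (e : E) : Prop :=
  Interesting M.b (M.Cw w) x e

/-- `e` is interesting for the firm `f` under `x`. -/
def Model.IntF (M : Model W F E) (f : F) (x : E → ℕ) (e : E) : Prop :=
  Interesting M.b (M.Cf f) x e

/-- `e` blocks `x`: it is interesting for both of its endpoints. -/
def Model.Blocks (M : Model W F E) (x : E → ℕ) (e : E) : Prop :=
  M.IntW (M.ew e) x e ∧ M.IntF (M.ef e) x e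

/-- `x` is a stable g-matching. -/
def Model.Stable (M : Model W F E) (x : E → ℕ) : Prop :=
  M.IsGM x ∧ ∀ e, ¬ M.Blocks x e

/-- `e ∈ U_F^+(x)`: `e` is interesting for its `F`-endpoint under `x`. -/
def Model.UFpos (M : Model W F E) (x : E → ℕ) (e : E) : Prop :=
  M.IntF (M.ef e) x e

/-- `e ∈ U_F^-(x)`: `x e > 0` and `e` is not interesting for its `F`-endpoint under `x`. -/
def Model.UFneg (M : Model W F E) (x : E → ℕ) (e : E) : Prop :=
  0 < x e ∧ ¬ M.IntF (M.ef e) x e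

/-- `(a, c)` is a legal `f`-pair under `x`: distinct edges of `E_f` with
`C_f (x + 1^a) = x + 1^a - 1^c`. -/
def Model.LegalFPair (M : Model W F E) (x : E → ℕ) (f : F) (a c : E) : Prop :=
  M.incF f a ∧ M.incF f c ∧ a ≠ c ∧ x a < M.b a ∧
    M.Cf f (x + Pi.single a 1) + Pi.single c 1 = x + Pi.single a 1

/-- `(c, a)` is a legal `w`-pair under `x`: `c ∈ E_w ∩ U_F^-(x)`, `a ∈ E_w ∩ U_F^+(x)`,
and `x + 1^a - 1^c` is acceptable for `C_w`. -/
def Model.LegalWPair (M : Model W F E) (x : E → ℕ) (w : W) (c a : E) : Prop :=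
  M.incW w c ∧ M.incW w a ∧ c ≠ a ∧ M.UFneg x c ∧ M.UFpos x a ∧
    M.Cw w (x + Pi.single a 1 - Pi.single c 1) = x + Pi.single a 1 - Pi.single c 1

/-- `(c, a)` is an essential `w`-pair under `x`: a legal `w`-pair such that no edge
`d ∈ (U_F^+(x) ∩ E_w) - {a}` is interesting for `w` under `x + 1^a - 1^c`. -/
def Model.EssWPair (M : Model W F E) (x : E → ℕ) (w : W) (c a : E) : Prop :=
  M.LegalWPair x w c a ∧
    ∀ d, M.incW w d → M.UFpos x d → d ≠ a →
      ¬ M.IntW w (((x + Pi.single a 1 - Pi.single c 1) : E → ℕ)) d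

/-- The preference relation `x ≺_F y` (for the firm side), on the `E_f`-coordinates. -/
def Model.PrecF (M : Model W F E) (x y : E → ℕ) : Prop :=
  x ≠ y ∧ ∀ f e, M.incF f e → M.Cf f (x ⊔ y) e = y e

/-- `R` is a rotation applicable to `x`: an edge-simple alternating cycle whose
consecutive pairs are legal `f`-pairs and essential `w`-pairs under `x`. -/
def Model.IsRotation (M : Model W F E) (x : E → ℕ) (R : Cyc E) : Prop :=
  Function.Injective R.a ∧ Function.Injective R.c ∧ (∀ i j, R.a i ≠ R.c j) ∧
  (∀ i, M.ef (R.a i) = M.ef (R.c i) ∧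
    M.LegalFPair x (M.ef (R.a i)) (R.a i) (R.c i)) ∧
  (∀ i, M.ew (R.c i) = M.ew (R.a (R.nxt i)) ∧
    M.EssWPair x (M.ew (R.c i)) (R.c i) (R.a (R.nxt i)))

/-- `lam` is a feasible weight for `R` at `x`: every intermediate shift is stable. -/
def Model.Feasible (M : Model W F E) (x : E → ℕ) (R : Cyc E) (lam : ℕ) : Prop :=
  ∀ j, 1 ≤ j → j ≤ lam → M.Stable (R.apply x j)

/-- `t = τ_R(x)` is the maximal feasible weight for `R` at `x`. -/
def Model.IsMaxWeight (M : Model W F E) (x : E → ℕ) (R : Cyc E) (t : ℕ) : Prop :=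
  1 ≤ t ∧ M.Feasible x R t ∧ ∀ t', M.Feasible x R t' → t' ≤ t

/-- A route: a sequence of stable g-matchings, each obtained from the previous one
by shifting along an applicable rotation with a feasible positive weight. -/
structure Route (M : Model W F E) where
  N : ℕ
  xs : ℕ → E → ℕ
  rot : ℕ → Cyc E
  lam : ℕ → ℕ
  stable0 : M.Stable (xs 0)
  isrot : ∀ i < N, M.IsRotation (xs i) (rot i)
  lam_pos : ∀ i < N, 1 ≤ lam i
  feas : ∀ i < N, M.Feasible (xs i) (rot i) (lam i)
  step : ∀ i < N, xs (i + 1) = (rot i).apply (xs i) (lam i)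

/-- A route is non-excessive: if the same rotation (as a cycle) is used twice, the
earlier occurrence is used with its maximal feasible weight. -/
def Route.NonExcessive {M : Model W F E} (T : Route M) : Prop :=
  ∀ i j, i < j → j < T.N → (T.rot i).Same (T.rot j) →
    M.IsMaxWeight (T.xs i) (T.rot i) (T.lam i)

/-- A route is principal: every rotation is applied with its maximal feasible weight. -/
def Route.Principal {M : Model W F E} (T : Route M) : Prop :=
  ∀ i < T.N, M.IsMaxWeight (T.xs i) (T.rot i) (T.lam i)

open scoped Classical in
/-- The number of steps of the route using the rotation `R` (as a cycle) with weight `l`. -/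
noncomputable def Route.count {M : Model W F E} (T : Route M) (R : Cyc E) (l : ℕ) : ℕ :=
  ((Finset.range T.N).filter (fun i => (T.rot i).Same R ∧ T.lam i = l)).card


/-- Property (3.3): for a stable `x`, `w ∈ W` and `c ∈ E_w ∩ U_F^-(x)`, if some legal
`w`-pair `(c, a')` exists, then there is a unique `a` such that `(c, a)` is an
essential `w`-pair under `x`. -/
theorem statement5 (M : Model W F E) (hM : M.Valid)
    (x : E → ℕ) (hx : M.Stable x) (w : W) (c : E)
    (hcw : M.incW w c) (hcU : M.UFneg x c)
    (hex : ∃ a', M.LegalWPair x w c a') :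
    ∃! a : E, M.EssWPair x w c a := by
  classical
  obtain ⟨⟨hxb, hCwx, _⟩, hnb⟩ := hx
  have cf : IsCF M.b (M.incW w) (M.Cw w) := hM.cfW w
  have hCx : M.Cw w x = x := hCwx w
  have hxc : 1 ≤ x c := hcU.1
  -- the set D of candidate edges
  have hDb : ∀ e, M.incW w e ∧ M.UFpos x e → x e < M.b e := by
    rintro e ⟨-, z', hz', hlt, -⟩
    exact lt_of_lt_of_le hlt (hz' e)
  have hcD : ¬ (M.incW w c ∧ M.UFpos x c) := fun h => hcU.2 h.2
  have hDnc : ∀ e, M.incW w e ∧ M.UFpos x e → e ≠ c := fun e he h => hcD (h ▸ he)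
  have hnotint : ∀ d, M.incW w d ∧ M.UFpos x d → ¬ Interesting M.b (M.Cw w) x d := by
    rintro d ⟨hdw, hdU⟩ hint
    refine hnb d ⟨?_, hdU⟩
    show Interesting M.b (M.Cw (M.ew d)) x d
    rwa [show M.ew d = w from hdw]
  set lo : E → ℕ := fun e => if e = c then x c - 1 else x e with hlo
  set u : E → ℕ := fun e => if M.incW w e ∧ M.UFpos x e then x e + 1 else lo e with hu
  set v : E → ℕ := fun e => if M.incW w e ∧ M.UFpos x e then x e + 1 else x e with hv
  have hloc : lo c = x c - 1 := if_pos rfl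
  have hloe : ∀ e, e ≠ c → lo e = x e := fun e he => if_neg he
  have huD : ∀ e, M.incW w e ∧ M.UFpos x e → u e = x e + 1 := fun e he => if_pos he
  have huN : ∀ e, ¬ (M.incW w e ∧ M.UFpos x e) → u e = lo e := fun e he => if_neg he
  have hvD : ∀ e, M.incW w e ∧ M.UFpos x e → v e = x e + 1 := fun e he => if_pos he
  have hvN : ∀ e, ¬ (M.incW w e ∧ M.UFpos x e) → v e = x e := fun e he => if_neg he
  have hlole : ∀ e, lo e ≤ x e := by
    intro e
    by_cases h : e = c
    · subst h; rw [hloc]; omega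
    · rw [hloe e h]
  have hlou : ∀ e, lo e ≤ u e := by
    intro e
    by_cases h : M.incW w e ∧ M.UFpos x e
    · rw [huD e h]; exact le_trans (hlole e) (Nat.le_succ _)
    · rw [huN e h]
  have huv : u ≤ v := by
    intro e
    by_cases h : M.incW w e ∧ M.UFpos x e
    · rw [huD e h, hvD e h]
    · rw [huN e h, hvN e h]; exact hlole e
  have hxv : x ≤ v := by
    intro e
    by_cases h : M.incW w e ∧ M.UFpos x e
    · rw [hvD e h]; exact Nat.le_succ _
    · rw [hvN e h]
  have hvb : inBox M.b v := by
    intro e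
    by_cases h : M.incW w e ∧ M.UFpos x e
    · rw [hvD e h]; exact hDb e h
    · rw [hvN e h]; exact hxb e
  have hub : inBox M.b u := fun e => le_trans (huv e) (hvb e)
  -- C v = x
  have hCvle : M.Cw w v ≤ x := by
    intro e
    by_cases hDe : M.incW w e ∧ M.UFpos x e
    · by_contra hgt
      push_neg at hgt
      have hz'v : x + Pi.single e 1 ≤ v := by
        intro e'
        rcases eq_or_ne e' e with rfl | hne
        · simp only [Pi.add_apply, Pi.single_eq_same]; rw [hvD e' hDe]
        · simp only [Pi.add_apply, Pi.single_eq_of_ne hne, add_zero]; exact hxv e'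
      have h2 := cf.a2 v (x + Pi.single e 1) hvb hz'v e
      rw [Pi.inf_apply] at h2
      have h3 : x e + 1 ≤ M.Cw w (x + Pi.single e 1) e := by
        refine le_trans (le_inf hgt ?_) h2
        simp only [Pi.add_apply, Pi.single_eq_same]
        exact le_rfl
      refine hnotint e hDe ⟨x + Pi.single e 1, fun e' => le_trans (hz'v e') (hvb e'), ?_, ?_, ?_⟩
      · simp only [Pi.add_apply, Pi.single_eq_same]; omega
      · intro e' h; simp only [Pi.add_apply, Pi.single_eq_of_ne h, add_zero]
      · exact lt_of_lt_of_le (Nat.lt_succ_self _) h3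
    · rw [← hvN e hDe]; exact cf.le v hvb e
  have hCv : M.Cw w v = x := by
    have h := cf.a1 v x hvb hxv hCvle
    rw [hCx] at h; exact h.symm
  -- lower bound for C u
  have hClow : ∀ e, lo e ≤ M.Cw w u e := by
    intro e
    have h2 := cf.a2 v u hvb huv e
    rw [Pi.inf_apply, hCv] at h2
    exact le_trans (le_inf (hlole e) (hlou e)) h2
  -- sums
  have Ssingle : ∀ a : E, M.incW w a →
      (∑ e ∈ Finset.univ.filter (M.incW w), (Pi.single a 1 : E → ℕ) e) = 1 := by
    intro a ha
    rw [Finset.sum_eq_single_of_mem a (Finset.mem_filter.2 ⟨Finset.mem_univ a, ha⟩)]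
    · exact Pi.single_eq_same a 1
    · intro b _ hb
      exact Pi.single_eq_of_ne hb 1
  have hval : ∀ a : E, c ≠ a → ∀ e, (((x + Pi.single a 1 - Pi.single c 1) : E → ℕ)) e
      = if e = a then x a + 1 else lo e := by
    intro a hca e
    simp only [Pi.sub_apply, Pi.add_apply, Pi.single_apply]
    by_cases h1 : e = a
    · subst h1
      have h2 : e ≠ c := fun h => hca (h.symm)
      rw [if_pos rfl, if_pos rfl, if_neg h2]
      omega
    · rw [if_neg h1, if_neg h1]
      by_cases h2 : e = c
      · subst h2; rw [if_pos rfl, hloc]; omega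
      · rw [if_neg h2, hloe e h2]; omega
  have Sshift : ∀ a : E, M.incW w a → c ≠ a →
      (∑ e ∈ Finset.univ.filter (M.incW w), (((x + Pi.single a 1 - Pi.single c 1) : E → ℕ)) e)
      = ∑ e ∈ Finset.univ.filter (M.incW w), x e := by
    intro a haw hca
    have key : ∀ e, (((x + Pi.single a 1 - Pi.single c 1) : E → ℕ)) e + (Pi.single c 1 : E → ℕ) e
        = x e + (Pi.single a 1 : E → ℕ) e := by
      intro e
      rw [hval a hca e]
      by_cases h1 : e = a
      · subst h1
        rw [if_pos rfl, Pi.single_eq_same, Pi.single_eq_of_ne (fun h => hca h.symm)]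
        omega
      · rw [if_neg h1, Pi.single_eq_of_ne h1, add_zero]
        by_cases h2 : e = c
        · subst h2; rw [Pi.single_eq_same, hloc]; omega
        · rw [Pi.single_eq_of_ne h2, hloe e h2]
          omega
    have h1 : (∑ e ∈ Finset.univ.filter (M.incW w),
          ((((x + Pi.single a 1 - Pi.single c 1) : E → ℕ)) e + (Pi.single c 1 : E → ℕ) e))
        = ∑ e ∈ Finset.univ.filter (M.incW w), (x e + (Pi.single a 1 : E → ℕ) e) :=
      Finset.sum_congr rfl fun e _ => key e
    rw [Finset.sum_add_distrib, Finset.sum_add_distrib, Ssingle c hcw, Ssingle a haw] at h1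
    omega
  have Slo : (∑ e ∈ Finset.univ.filter (M.incW w), lo e) + 1
      = ∑ e ∈ Finset.univ.filter (M.incW w), x e := by
    have key : ∀ e, lo e + (Pi.single c 1 : E → ℕ) e = x e := by
      intro e
      by_cases h : e = c
      · subst h; rw [hloc, Pi.single_eq_same]; omega
      · rw [hloe e h, Pi.single_eq_of_ne h, add_zero]
    have h1 : (∑ e ∈ Finset.univ.filter (M.incW w), (lo e + (Pi.single c 1 : E → ℕ) e))
        = ∑ e ∈ Finset.univ.filter (M.incW w), x e :=
      Finset.sum_congr rfl fun e _ => key e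
    rw [Finset.sum_add_distrib, Ssingle c hcw] at h1
    exact h1
  have hle1 : (∑ e ∈ Finset.univ.filter (M.incW w), M.Cw w u e)
      ≤ ∑ e ∈ Finset.univ.filter (M.incW w), x e := by
    have h := cf.a3 v u hvb huv
    rwa [hCv] at h
  obtain ⟨a', hleg'⟩ := hex
  have hca' : c ≠ a' := hleg'.2.2.1
  have hDa' : M.incW w a' ∧ M.UFpos x a' := ⟨hleg'.2.1, hleg'.2.2.2.2.1⟩
  have hCya' : M.Cw w (x + Pi.single a' 1 - Pi.single c 1)
      = x + Pi.single a' 1 - Pi.single c 1 := hleg'.2.2.2.2.2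
  have hyu : ∀ a : E, M.incW w a ∧ M.UFpos x a →
      ∀ e, (((x + Pi.single a 1 - Pi.single c 1) : E → ℕ)) e ≤ u e := by
    intro a hDa e
    rw [hval a (Ne.symm (hDnc a hDa)) e]
    by_cases h1 : e = a
    · rw [if_pos h1, h1, huD a hDa]
    · rw [if_neg h1]; exact hlou e
  have hge1 : (∑ e ∈ Finset.univ.filter (M.incW w), x e)
      ≤ ∑ e ∈ Finset.univ.filter (M.incW w), M.Cw w u e := by
    have h := cf.a3 u (x + Pi.single a' 1 - Pi.single c 1) hub (fun e => hyu a' hDa' e)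
    rw [hCya'] at h
    rwa [Sshift a' hDa'.1 hca'] at h
  have hSCu : (∑ e ∈ Finset.univ.filter (M.incW w), M.Cw w u e)
      = ∑ e ∈ Finset.univ.filter (M.incW w), x e := le_antisymm hle1 hge1
  -- C u e = lo e whenever e is not a candidate
  have hgle : ∀ e, ¬ (M.incW w e ∧ M.UFpos x e) → M.Cw w u e = lo e := by
    intro e he
    refine le_antisymm ?_ (hClow e)
    rw [← huN e he]
    exact cf.le u hub e
  -- exactly one extra unit
  have hsum1 : (∑ e ∈ Finset.univ.filter (M.incW w), (M.Cw w u e - lo e)) = 1 := by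
    have h2 : (∑ e ∈ Finset.univ.filter (M.incW w), ((M.Cw w u e - lo e) + lo e))
        = ∑ e ∈ Finset.univ.filter (M.incW w), M.Cw w u e :=
      Finset.sum_congr rfl fun e _ => Nat.sub_add_cancel (hClow e)
    rw [Finset.sum_add_distrib] at h2
    omega
  obtain ⟨a0, ha0S, hane⟩ := Finset.exists_ne_zero_of_sum_ne_zero
    (by rw [hsum1]; exact one_ne_zero :
      (∑ e ∈ Finset.univ.filter (M.incW w), (M.Cw w u e - lo e)) ≠ 0)
  have hDa0 : M.incW w a0 ∧ M.UFpos x a0 := by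
    by_contra h
    exact hane (by rw [hgle a0 h]; omega)
  have ha0w : M.incW w a0 := hDa0.1
  have ha0c : a0 ≠ c := hDnc a0 hDa0
  have hca0 : c ≠ a0 := ha0c.symm
  have hga0 : M.Cw w u a0 - lo a0 = 1 := by
    have hle : M.Cw w u a0 ≤ u a0 := cf.le u hub a0
    rw [huD a0 hDa0] at hle
    have hx0 : lo a0 = x a0 := hloe a0 ha0c
    have := hClow a0
    omega
  have hrest : ∀ e, e ≠ a0 → M.Cw w u e = lo e := by
    intro e hne
    by_cases hS : e ∈ Finset.univ.filter (M.incW w)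
    · have h : M.Cw w u a0 - lo a0
            + ∑ e ∈ (Finset.univ.filter (M.incW w)).erase a0, (M.Cw w u e - lo e)
          = ∑ e ∈ Finset.univ.filter (M.incW w), (M.Cw w u e - lo e) :=
        Finset.add_sum_erase (Finset.univ.filter (M.incW w))
          (fun e => M.Cw w u e - lo e) ha0S
      have h0 : (∑ e ∈ (Finset.univ.filter (M.incW w)).erase a0, (M.Cw w u e - lo e)) = 0 := by
        omega
      have h1 := (Finset.sum_eq_zero_iff.1 h0) e (Finset.mem_erase.2 ⟨hne, hS⟩)
      have := hClow e
      omega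
    · have hw' : ¬ M.incW w e := fun h => hS (Finset.mem_filter.2 ⟨Finset.mem_univ e, h⟩)
      exact hgle e (fun hD' => hw' hD'.1)
  have hCu : M.Cw w u = x + Pi.single a0 1 - Pi.single c 1 := by
    funext e
    rw [hval a0 hca0 e]
    by_cases h1 : e = a0
    · subst h1
      rw [if_pos rfl]
      have hx0 : lo e = x e := hloe e ha0c
      have := hClow e
      omega
    · rw [if_neg h1]
      exact hrest e h1
  have hCyb : M.Cw w (x + Pi.single a0 1 - Pi.single c 1)
      = x + Pi.single a0 1 - Pi.single c 1 := by
    have h := cf.a1 u (x + Pi.single a0 1 - Pi.single c 1) hub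
      (fun e => hyu a0 hDa0 e) (le_of_eq hCu)
    rw [hCu] at h
    exact h
  have hCua0 : M.Cw w u a0 = x a0 + 1 := by
    rw [hCu, hval a0 hca0 a0, if_pos rfl]
  have hLegal : M.LegalWPair x w c a0 := ⟨hcw, ha0w, hca0, hcU, hDa0.2, hCyb⟩
  have hEss : ∀ d, M.incW w d → M.UFpos x d → d ≠ a0 →
      ¬ M.IntW w (((x + Pi.single a0 1 - Pi.single c 1) : E → ℕ)) d := by
    intro d hdw hdU hda hint
    obtain ⟨z'', hz''b, hlt'', heq'', hC''⟩ := hint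
    have hDd : M.incW w d ∧ M.UFpos x d := ⟨hdw, hdU⟩
    have hdc : d ≠ c := hDnc d hDd
    have hybd : (((x + Pi.single a0 1 - Pi.single c 1) : E → ℕ)) d = x d := by
      rw [hval a0 hca0 d, if_neg hda, hloe d hdc]
    have hz'le : (x + Pi.single a0 1 - Pi.single c 1) + Pi.single d 1 ≤ z'' := by
      intro e
      rcases eq_or_ne e d with rfl | hne
      · simp only [Pi.add_apply, Pi.single_eq_same]; omega
      · simp only [Pi.add_apply, Pi.single_eq_of_ne hne, add_zero]
        rw [heq'' e hne]
    have h2 := cf.a2 z'' ((x + Pi.single a0 1 - Pi.single c 1) + Pi.single d 1) hz''b hz'le d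
    rw [Pi.inf_apply] at h2
    have hCz'd : x d + 1 ≤ M.Cw w ((((x + Pi.single a0 1 - Pi.single c 1) + Pi.single d 1) : E → ℕ)) d := by
      refine le_trans (le_inf ?_ ?_) h2
      · rw [hybd] at hC''; omega
      · simp only [Pi.add_apply, Pi.single_eq_same]; rw [hybd]
    have hz'u : ∀ e, ((((x + Pi.single a0 1 - Pi.single c 1) + Pi.single d 1) : E → ℕ)) e ≤ u e := by
      intro e
      rcases eq_or_ne e d with rfl | hne
      · simp only [Pi.add_apply, Pi.single_eq_same]
        rw [hybd, huD e hDd]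
      · simp only [Pi.add_apply, Pi.single_eq_of_ne hne, add_zero]
        exact hyu a0 hDa0 e
    have h3 := cf.a2 u ((x + Pi.single a0 1 - Pi.single c 1) + Pi.single d 1) hub
      (fun e => hz'u e)
    have hlowz : ∀ e, (((x + Pi.single a0 1 - Pi.single c 1) : E → ℕ)) e
        ≤ M.Cw w ((((x + Pi.single a0 1 - Pi.single c 1) + Pi.single d 1) : E → ℕ)) e := by
      intro e
      have h4 := h3 e
      rw [Pi.inf_apply, hCu] at h4
      refine le_trans (le_inf (le_refl _) ?_) h4
      exact Nat.le_add_right _ _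
    have hlow2 : ∀ e, ((((x + Pi.single a0 1 - Pi.single c 1) + Pi.single d 1) : E → ℕ)) e
        ≤ M.Cw w ((((x + Pi.single a0 1 - Pi.single c 1) + Pi.single d 1) : E → ℕ)) e := by
      intro e
      rcases eq_or_ne e d with rfl | hne
      · rw [Pi.add_apply, Pi.single_eq_same, hybd]
        exact hCz'd
      · rw [Pi.add_apply, Pi.single_eq_of_ne hne, add_zero]
        exact hlowz e
    have hS1 : (∑ e ∈ Finset.univ.filter (M.incW w),
          ((((x + Pi.single a0 1 - Pi.single c 1) + Pi.single d 1) : E → ℕ)) e)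
        ≤ ∑ e ∈ Finset.univ.filter (M.incW w),
          M.Cw w ((((x + Pi.single a0 1 - Pi.single c 1) + Pi.single d 1) : E → ℕ)) e :=
      Finset.sum_le_sum (fun e _ => hlow2 e)
    have hS2 : (∑ e ∈ Finset.univ.filter (M.incW w),
          M.Cw w ((((x + Pi.single a0 1 - Pi.single c 1) + Pi.single d 1) : E → ℕ)) e)
        ≤ ∑ e ∈ Finset.univ.filter (M.incW w), M.Cw w u e :=
      cf.a3 u _ hub (fun e => hz'u e)
    have hS3 : (∑ e ∈ Finset.univ.filter (M.incW w),
          ((((x + Pi.single a0 1 - Pi.single c 1) + Pi.single d 1) : E → ℕ)) e)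
        = (∑ e ∈ Finset.univ.filter (M.incW w), x e) + 1 := by
      have := Finset.sum_add_distrib (s := Finset.univ.filter (M.incW w))
        (f := fun e => (((x + Pi.single a0 1 - Pi.single c 1) : E → ℕ)) e)
        (g := fun e => (Pi.single d 1 : E → ℕ) e)
      rw [Sshift a0 ha0w hca0, Ssingle d hdw] at this
      exact this
    omega
  refine ⟨a0, ⟨hLegal, hEss⟩, ?_⟩
  intro a hA
  obtain ⟨hlegA, hnoA⟩ := hA
  by_contra hne
  have hDa : M.incW w a ∧ M.UFpos x a := ⟨hlegA.2.1, hlegA.2.2.2.2.1⟩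
  have hcaA : c ≠ a := hlegA.2.2.1
  have hno := hnoA a0 ha0w hDa0.2 (fun h => hne h.symm)
  apply hno
  have hzu : ∀ e, ((((x + Pi.single a 1 - Pi.single c 1) + Pi.single a0 1) : E → ℕ)) e ≤ u e := by
    intro e
    rcases eq_or_ne e a0 with rfl | hne0
    · have hea : e ≠ a := fun h => hne (h.symm.trans rfl)
      rw [Pi.add_apply, Pi.single_eq_same, hval a hcaA e, if_neg hea, hloe e ha0c, huD e hDa0]
    · rw [Pi.add_apply, Pi.single_eq_of_ne hne0, add_zero]
      exact hyu a hDa e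
  have hyaa0 : (((x + Pi.single a 1 - Pi.single c 1) : E → ℕ)) a0 = x a0 := by
    rw [hval a hcaA a0, if_neg (fun h : a0 = a => hne h.symm), hloe a0 ha0c]
  have hz'a0 : ((((x + Pi.single a 1 - Pi.single c 1) + Pi.single a0 1) : E → ℕ)) a0 = x a0 + 1 := by
    rw [Pi.add_apply, Pi.single_eq_same, hyaa0]
  have h4 := cf.a2 u ((x + Pi.single a 1 - Pi.single c 1) + Pi.single a0 1) hub
    (fun e => hzu e) a0
  rw [Pi.inf_apply, hCua0, hz'a0] at h4
  show Interesting M.b (M.Cw w) (((x + Pi.single a 1 - Pi.single c 1) : E → ℕ)) a0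
  refine ⟨(x + Pi.single a 1 - Pi.single c 1) + Pi.single a0 1,
    fun e => le_trans (hzu e) (hub e), ?_, ?_, ?_⟩
  · rw [hz'a0, hyaa0]; omega
  · intro e' h
    rw [Pi.add_apply, Pi.single_eq_of_ne h, add_zero]
  · rw [hyaa0]
    exact lt_of_lt_of_le (Nat.lt_succ_self _) (le_trans (le_inf le_rfl le_rfl) h4)

end SGMMStmt
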